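/- Let d ≥ 2 and let v : Fin d → ℝ satisfy ∑_j v_j = 1 and ∑_j v_j² = d. Writing v_max = max_j v_j and v_min = min_j v_j, one has ((d−1)·v_max − (d+1)·v_min)/2 ≤ ((d−1)/(√2·d))·√((d+1)(d² + d + 2)) − 1/d, and equality holds if and only if, setting s = √((d+1)/(2(d²+d+2))), the vector v takes the value 1/d + ((d²−d+2)/d)·s at exactly one coordinate, the value 1/d − ((d²+d−2)/d)·s at exactly one coordinate, and the value 1/d + (2/d)·s at the remaining d−2 coordinates. -/

import Mathlib

set_option maxHeartbeats 1600000 in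
/-- Lemma S3: If `d ≥ 2` and `v : Fin d → ℝ` satisfies `∑ v j = 1` and
`∑ (v j)² = d`, then with `v_max = max_j v j` and `v_min = min_j v j`,
`((d−1)v_max − (d+1)v_min)/2 ≤ ((d−1)/(√2·d))·√((d+1)(d²+d+2)) − 1/d`, with equality iff,
setting `s = √((d+1)/(2(d²+d+2)))`, `v` takes the value `1/d + ((d²−d+2)/d)s` at exactly one
coordinate, `1/d − ((d²+d−2)/d)s` at exactly one coordinate, and `1/d + (2/d)s` at the
remaining `d−2` coordinates. -/
theorem stmt_14 (d : ℕ) (hd : 2 ≤ d) (v : Fin d → ℝ)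
    (hsum : ∑ j, v j = 1) (hsq : ∑ j, v j ^ 2 = d) :
    ((((d : ℝ) - 1) * (⨆ j, v j) - ((d : ℝ) + 1) * (⨅ j, v j)) / 2 ≤
      (((d : ℝ) - 1) / (Real.sqrt 2 * d)) *
        Real.sqrt (((d : ℝ) + 1) * ((d : ℝ) ^ 2 + d + 2)) - 1 / d) ∧
    ((((d : ℝ) - 1) * (⨆ j, v j) - ((d : ℝ) + 1) * (⨅ j, v j)) / 2 =
        (((d : ℝ) - 1) / (Real.sqrt 2 * d)) *
          Real.sqrt (((d : ℝ) + 1) * ((d : ℝ) ^ 2 + d + 2)) - 1 / d ↔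
      ∃ j₀ j₁ : Fin d, j₀ ≠ j₁ ∧
        v j₀ = 1 / d + (((d : ℝ) ^ 2 - d + 2) / d) *
          Real.sqrt (((d : ℝ) + 1) / (2 * ((d : ℝ) ^ 2 + d + 2))) ∧
        v j₁ = 1 / d - (((d : ℝ) ^ 2 + d - 2) / d) *
          Real.sqrt (((d : ℝ) + 1) / (2 * ((d : ℝ) ^ 2 + d + 2))) ∧
        ∀ j, j ≠ j₀ → j ≠ j₁ →
          v j = 1 / d + (2 / d) *
            Real.sqrt (((d : ℝ) + 1) / (2 * ((d : ℝ) ^ 2 + d + 2)))) := by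
  have hdR : (2:ℝ) ≤ (d:ℝ) := by exact_mod_cast hd
  have hd0 : (0:ℝ) < d := by linarith
  haveI : NeZero d := ⟨by omega⟩
  set D : ℝ := (d:ℝ)^2 + (d:ℝ) + 2 with hDdef
  have hDpos : (0:ℝ) < D := by positivity
  set s : ℝ := Real.sqrt (((d:ℝ)+1)/(2*D)) with hsdef
  have hs0 : 0 < s := Real.sqrt_pos.mpr (by positivity)
  have hs2 : s^2 = ((d:ℝ)+1)/(2*D) := Real.sq_sqrt (by positivity)
  have hs2' : 2*((d:ℝ)^2 + (d:ℝ) + 2)*s^2 = (d:ℝ)+1 := by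
    rw [← hDdef, hs2]; field_simp
  set B : ℝ := (((d:ℝ)-1)*s*D - 1)/d with hBdef
  have h22 : (Real.sqrt 2)^2 = 2 := Real.sq_sqrt (by norm_num)
  have h2pos : (0:ℝ) < Real.sqrt 2 := Real.sqrt_pos.mpr (by norm_num)
  have hRHS : (((d : ℝ) - 1) / (Real.sqrt 2 * d)) * Real.sqrt (((d : ℝ) + 1) * D) - 1 / d = B := by
    have h1 : Real.sqrt (((d:ℝ)+1) * D) = Real.sqrt 2 * s * D := by
      rw [show ((d:ℝ)+1) * D = (Real.sqrt 2 * s * D)^2 by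
        rw [mul_pow, mul_pow, h22, hs2]; field_simp]
      exact Real.sqrt_sq (by positivity)
    rw [h1, hBdef]
    field_simp
  -- argmax / argmin
  clear_value D s B
  obtain ⟨j₀, hj₀⟩ := Finite.exists_max v
  obtain ⟨j₁, hj₁⟩ := Finite.exists_min v
  have hsup : (⨆ j, v j) = v j₀ :=
    le_antisymm (ciSup_le hj₀) (le_ciSup (Set.finite_range v).bddAbove j₀)
  have hinf : (⨅ j, v j) = v j₁ :=
    le_antisymm (ciInf_le (Set.finite_range v).bddBelow j₁) (le_ciInf hj₁)
  have hne : j₀ ≠ j₁ := by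
    intro h
    have hconst : ∀ j, v j = v j₀ := fun j => le_antisymm (hj₀ j) (h ▸ hj₁ j)
    have h1 : (1:ℝ) = d * v j₀ := by
      have := Finset.sum_congr rfl fun j (_ : j ∈ Finset.univ) => hconst j
      rw [hsum] at this
      simpa [Finset.card_univ, mul_comm] using this
    have h2 : (d:ℝ) = d * (v j₀)^2 := by
      have := Finset.sum_congr rfl fun j (_ : j ∈ Finset.univ) => congrArg (·^2) (hconst j)
      rw [hsq] at this
      simpa [Finset.card_univ, mul_comm] using this
    have e4 : (d:ℝ) * (v j₀)^2 = v j₀ := by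
      calc (d:ℝ) * (v j₀)^2 = ((d:ℝ) * v j₀) * v j₀ := by ring
        _ = 1 * v j₀ := by rw [← h1]
        _ = v j₀ := one_mul _
    have e5 : v j₀ = (d:ℝ) := by linarith
    rw [e5] at h1
    nlinarith
  -- the comparison vector
  set C : ℝ := (1 + 2*s)/d with hC
  set ca : ℝ := s*((d:ℝ)-1) with hca
  set cb : ℝ := -(s*((d:ℝ)+1)) with hcb
  set w : Fin d → ℝ := fun j => C + ca*(if j = j₀ then 1 else 0) + cb*(if j = j₁ then 1 else 0) with hw
  clear_value C ca cb w
  have hvw : ∑ j, v j * w j = C + ca * v j₀ + cb * v j₁ := by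
    have hp : ∀ j, v j * w j = C * v j + (if j = j₀ then ca * v j else 0) + (if j = j₁ then cb * v j else 0) := by
      intro j; by_cases h0 : j = j₀ <;> by_cases h1 : j = j₁ <;>
        simp [hw, h0, h1, hne, hne.symm] <;> ring
    rw [Finset.sum_congr rfl fun j _ => hp j]
    rw [Finset.sum_add_distrib, Finset.sum_add_distrib, ← Finset.mul_sum, hsum]
    simp [Finset.sum_ite_eq']
  have hw2 : ∑ j, (w j)^2 = d*C^2 + (ca^2 + 2*C*ca) + (cb^2 + 2*C*cb) := by
    have hp : ∀ j, (w j)^2 = C^2 + (if j = j₀ then ca^2 + 2*C*ca else 0) + (if j = j₁ then cb^2 + 2*C*cb else 0) := by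
      intro j
      by_cases h0 : j = j₀ <;> by_cases h1 : j = j₁
      · exact absurd (h0.symm.trans h1) hne
      all_goals simp [hw, h0, h1, hne, hne.symm] <;> ring
    rw [Finset.sum_congr rfl fun j _ => hp j]
    rw [Finset.sum_add_distrib, Finset.sum_add_distrib]
    simp [Finset.sum_ite_eq', Finset.card_univ, mul_comm]
  have hE : ∑ j, (v j - w j)^2
      = (d:ℝ) - 2*(C + ca*v j₀ + cb*v j₁) + (d*C^2 + (ca^2+2*C*ca) + (cb^2+2*C*cb)) := by
    have hp : ∀ j, (v j - w j)^2 = v j^2 - 2*(v j * w j) + (w j)^2 := fun j => by ring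
    rw [Finset.sum_congr rfl fun j _ => hp j, Finset.sum_add_distrib, Finset.sum_sub_distrib,
      ← Finset.mul_sum, hsq, hvw, hw2]
  have hkey : (d:ℝ) - 2*C + (d*C^2 + (ca^2+2*C*ca) + (cb^2+2*C*cb)) = 4*s*B := by
    rw [hC, hca, hcb, hBdef, hDdef]
    field_simp
    linear_combination (-((d:ℝ)-1)) * hs2'
  have hcacb : ca * v j₀ + cb * v j₁ = 2*s*((((d:ℝ)-1)*v j₀ - ((d:ℝ)+1)*v j₁)/2) := by
    rw [hca, hcb]; ring
  have hE2 : ∑ j, (v j - w j)^2 = 4*s*(B - (((d:ℝ)-1)*v j₀ - ((d:ℝ)+1)*v j₁)/2) := by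
    rw [hE]; linear_combination hkey - 2 * hcacb
  have hEnn : 0 ≤ ∑ j, (v j - w j)^2 := Finset.sum_nonneg fun j _ => sq_nonneg _
  rw [hsup, hinf, hRHS]
  have hineq : (((d:ℝ)-1)*v j₀ - ((d:ℝ)+1)*v j₁)/2 ≤ B := by
    have h4 : 0 ≤ 4*s*(B - (((d:ℝ)-1)*v j₀ - ((d:ℝ)+1)*v j₁)/2) := by rw [← hE2]; exact hEnn
    by_contra hcon
    push_neg at hcon
    have h6 : 4*s*(B - (((d:ℝ)-1)*v j₀ - ((d:ℝ)+1)*v j₁)/2) < 0 :=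
      mul_neg_of_pos_of_neg (by positivity) (by linarith)
    linarith
  refine ⟨hineq, ?_, ?_⟩
  · -- forward
    intro hFB
    have hzero : ∑ j, (v j - w j)^2 = 0 := by rw [hE2, hFB, sub_self, mul_zero]
    have hall : ∀ j, v j = w j := by
      intro j
      have h := (Finset.sum_eq_zero_iff_of_nonneg fun i _ => sq_nonneg (v i - w i)).mp
        hzero j (Finset.mem_univ j)
      have := (pow_eq_zero_iff (two_ne_zero : (2:ℕ) ≠ 0)).mp h
      linarith [sub_eq_zero.mp this]
    refine ⟨j₀, j₁, hne, ?_, ?_, ?_⟩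
    · rw [hall j₀]
      simp only [hw, if_pos rfl, ↓reduceIte, if_neg hne, mul_one, mul_zero, add_zero]
      rw [hC, hca]; field_simp; ring_nf
    · rw [hall j₁]
      simp only [hw, if_pos rfl, ↓reduceIte, if_neg hne.symm, mul_one, mul_zero, add_zero, zero_add]
      rw [hC, hcb]; field_simp; ring
    · intro j hj0 hj1
      rw [hall j]
      simp only [hw, if_neg hj0, if_neg hj1, mul_zero, add_zero]
      rw [hC]; field_simp
  · -- backward
    rintro ⟨i₀, i₁, hne', h0, h1, hrest⟩
    have hmid0 : (2:ℝ)/d * s ≤ ((d:ℝ)^2 - d + 2)/d * s := by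
      have t0 : (0:ℝ) ≤ ((d:ℝ)^2 - d)/d * s :=
        mul_nonneg (div_nonneg (by nlinarith [hdR]) hd0.le) hs0.le
      have hsplit : ((d:ℝ)^2 - d + 2)/d * s = ((d:ℝ)^2 - d)/d * s + 2/d * s := by ring
      linarith
    have hmid1 : -((((d:ℝ)^2 + d - 2)/d) * s) ≤ (2:ℝ)/d * s := by
      have t1 : (0:ℝ) ≤ (((d:ℝ)^2 + d - 2)/d) * s :=
        mul_nonneg (div_nonneg (by nlinarith [hdR]) hd0.le) hs0.le
      have t2 : (0:ℝ) ≤ (2:ℝ)/d * s := by positivity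
      linarith
    have hmax : ∀ j, v j ≤ v i₀ := by
      intro j
      by_cases e0 : j = i₀
      · rw [e0]
      by_cases e1 : j = i₁
      · rw [e1, h1, h0]; linarith
      · rw [hrest j e0 e1, h0]; linarith
    have hmin : ∀ j, v i₁ ≤ v j := by
      intro j
      by_cases e0 : j = i₀
      · rw [e0, h1, h0]; linarith
      by_cases e1 : j = i₁
      · rw [e1]
      · rw [hrest j e0 e1, h1]; linarith
    have e6 : v j₀ = v i₀ := le_antisymm (hmax j₀) (hj₀ i₀)
    have e7 : v j₁ = v i₁ := le_antisymm (hj₁ i₁) (hmin j₁)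
    rw [e6, e7, h0, h1, hBdef, hDdef]
    field_simp
    ring
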